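/- For every k ≥ 0, the dispersion polynomial p(λ, μ) = det(λ A₀ + μ A₁ + B) equals λ(λ+1)^{k+1} − μ² ∑_{j=0}^{k} θ_{k+1-j} (λ+1)^j. -/

import Mathlib

set_option maxHeartbeats 1000000

open Matrix Finset

lemma lowtri_det {n : ℕ} (a : ℂ) :
    (Matrix.of fun i j : Fin n =>
      if (j : ℕ) + 1 = (i : ℕ) then (-1 : ℂ) else if (i : ℕ) = (j : ℕ) then a else 0).det
    = a ^ n := by
  rw [Matrix.det_of_lowerTriangular _ (fun i j h => ?_)]
  · simp only [Matrix.of_apply]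
    rw [Finset.prod_congr rfl (fun i _ => ?_), Finset.prod_const, Finset.card_univ,
      Fintype.card_fin]
    simp
  · have hij : (i : ℕ) < (j : ℕ) := h
    simp only [Matrix.of_apply]
    rw [if_neg (by omega), if_neg (by omega)]

lemma hess_det (a : ℂ) : ∀ (n : ℕ) (c : Fin (n + 1) → ℂ),
    (Matrix.of fun i j : Fin (n + 1) =>
      if (i : ℕ) = 0 then c j
      else if (j : ℕ) + 1 = (i : ℕ) then -1
      else if (i : ℕ) = (j : ℕ) then a else 0).det
    = ∑ j : Fin (n + 1), c j * a ^ (n - (j : ℕ)) := by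
  intro n
  induction n with
  | zero =>
    intro c
    simp [Matrix.det_fin_one]
  | succ n ih =>
    intro c
    set M : Matrix (Fin (n + 2)) (Fin (n + 2)) ℂ := Matrix.of fun i j : Fin (n + 2) =>
      if (i : ℕ) = 0 then c j
      else if (j : ℕ) + 1 = (i : ℕ) then -1
      else if (i : ℕ) = (j : ℕ) then a else 0 with hM
    rw [Matrix.det_succ_column_zero, Fin.sum_univ_succ, Fin.sum_univ_succ]
    have htail : ∀ i : Fin n, (-1 : ℂ) ^ ((i.succ.succ : Fin (n + 2)) : ℕ) *
        M i.succ.succ 0 * (M.submatrix i.succ.succ.succAbove Fin.succ).det = 0 := by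
      intro i
      have : M i.succ.succ 0 = 0 := by
        simp only [hM, Matrix.of_apply, Fin.val_succ, Fin.val_zero]
        simp
      rw [this]; ring
    rw [Finset.sum_congr rfl (fun i _ => htail i), Finset.sum_const, smul_zero]
    have h0 : M 0 0 = c 0 := by simp [hM]
    have hm0 : (M.submatrix (0 : Fin (n + 2)).succAbove Fin.succ).det = a ^ (n + 1) := by
      have : M.submatrix (0 : Fin (n + 2)).succAbove Fin.succ
          = Matrix.of fun i j : Fin (n + 1) =>
            if (j : ℕ) + 1 = (i : ℕ) then (-1 : ℂ) else if (i : ℕ) = (j : ℕ) then a else 0 := by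
        ext i j
        simp only [hM, Matrix.submatrix_apply, Fin.succAbove_zero, Matrix.of_apply,
          Fin.val_succ]
        rw [if_neg (by omega)]
        by_cases h : (j : ℕ) + 1 = (i : ℕ)
        · rw [if_pos (by omega), if_pos h]
        · rw [if_neg (by omega), if_neg h]
          by_cases h2 : (i : ℕ) = (j : ℕ)
          · rw [if_pos (by omega), if_pos h2]
          · rw [if_neg (by omega), if_neg h2]
      rw [this, lowtri_det]
    have h1 : M (Fin.succ 0) 0 = -1 := by
      simp only [hM, Matrix.of_apply, Fin.val_succ, Fin.val_zero]
      norm_num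
    have hval : ∀ i : Fin (n + 1),
        (((Fin.succ 0 : Fin (n + 2)).succAbove i : Fin (n + 2)) : ℕ)
          = if (i : ℕ) = 0 then 0 else (i : ℕ) + 1 := by
      intro i
      rw [Fin.succAbove]
      split_ifs with hc1 hc2 hc3
      · simp at hc1 ⊢; omega
      · simp [Fin.lt_def] at hc1 hc2; omega
      · simp [Fin.lt_def] at hc1 hc3; omega
      · simp
    have hm1 : (M.submatrix (Fin.succ 0 : Fin (n + 2)).succAbove Fin.succ).det
        = ∑ j : Fin (n + 1), c j.succ * a ^ (n - (j : ℕ)) := by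
      have : M.submatrix (Fin.succ 0 : Fin (n + 2)).succAbove Fin.succ
          = Matrix.of fun i j : Fin (n + 1) =>
            if (i : ℕ) = 0 then c j.succ
            else if (j : ℕ) + 1 = (i : ℕ) then -1
            else if (i : ℕ) = (j : ℕ) then a else 0 := by
        ext i j
        simp only [hM, Matrix.submatrix_apply, Matrix.of_apply, Fin.val_succ]
        by_cases hi : (i : ℕ) = 0
        · rw [if_pos hi]
          rw [show (((Fin.succ 0 : Fin (n + 2))).succAbove i : ℕ) = 0 by
            rw [hval i, if_pos hi], if_pos rfl]
        · rw [if_neg hi]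
          rw [show (((Fin.succ 0 : Fin (n + 2))).succAbove i : ℕ) = (i : ℕ) + 1 by
            rw [hval i, if_neg hi]]
          rw [if_neg (by omega)]
          by_cases h : (j : ℕ) + 1 = (i : ℕ)
          · rw [if_pos (by omega), if_pos h]
          · rw [if_neg (by omega), if_neg h]
            by_cases h2 : (i : ℕ) = (j : ℕ)
            · rw [if_pos (by omega), if_pos h2]
            · rw [if_neg (by omega), if_neg h2]
      rw [this, ih]
    rw [h0, h1, hm0, hm1]
    rw [show (∑ j : Fin (n + 1 + 1), c j * a ^ (n + 1 - (j : ℕ)))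
        = c 0 * a ^ (n + 1) + ∑ j : Fin (n + 1), c j.succ * a ^ (n - (j : ℕ)) by
      rw [Fin.sum_univ_succ]
      simp only [Fin.val_zero, Nat.sub_zero, Fin.val_succ]
      congr 1
      exact Finset.sum_congr rfl fun j _ => by congr 2; omega]
    simp only [Fin.val_zero, Fin.val_succ, pow_zero, pow_one, zero_add]
    ring

/-- The dispersion polynomial `p(λ,μ) = det(λ A₀ + μ A₁ + B)` equals
`λ(λ+1)^(k+1) − μ² ∑_{j=0}^{k} θ_{k+1-j} (λ+1)^j`. -/
theorem dispersion_polynomial (k : ℕ) (θ : Fin (k + 1) → ℝ) (lam mu : ℂ) :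
    Matrix.det
      (lam • (1 : Matrix (Fin (k + 2)) (Fin (k + 2)) ℂ)
        + mu • (Matrix.of fun i j : Fin (k + 2) =>
            if (i : ℕ) = 0 then
              (if (j : ℕ) = 0 then 0
               else (θ ⟨(j : ℕ) - 1, by have := j.isLt; omega⟩ : ℂ))
            else if (i : ℕ) = 1 ∧ (j : ℕ) = 0 then 1 else 0)
        + (Matrix.of fun i j : Fin (k + 2) =>
            if (i : ℕ) = (j : ℕ) ∧ 1 ≤ (i : ℕ) then 1
            else if (i : ℕ) = (j : ℕ) + 1 ∧ 1 ≤ (j : ℕ) then -1 else 0))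
      = lam * (lam + 1) ^ (k + 1)
        - mu ^ 2 * ∑ j ∈ Finset.range (k + 1),
            (θ ⟨k - j, by omega⟩ : ℂ) * (lam + 1) ^ j := by
  set A : Matrix (Fin (k + 2)) (Fin (k + 2)) ℂ :=
      lam • (1 : Matrix (Fin (k + 2)) (Fin (k + 2)) ℂ)
        + mu • (Matrix.of fun i j : Fin (k + 2) =>
            if (i : ℕ) = 0 then
              (if (j : ℕ) = 0 then 0
               else (θ ⟨(j : ℕ) - 1, by have := j.isLt; omega⟩ : ℂ))
            else if (i : ℕ) = 1 ∧ (j : ℕ) = 0 then 1 else 0)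
        + (Matrix.of fun i j : Fin (k + 2) =>
            if (i : ℕ) = (j : ℕ) ∧ 1 ≤ (i : ℕ) then 1
            else if (i : ℕ) = (j : ℕ) + 1 ∧ 1 ≤ (j : ℕ) then -1 else 0) with hA
  have hentry : ∀ i j : Fin (k + 2), A i j =
      lam * (if i = j then 1 else 0)
      + mu * (if (i : ℕ) = 0 then
              (if (j : ℕ) = 0 then 0
               else (θ ⟨(j : ℕ) - 1, by have := j.isLt; omega⟩ : ℂ))
            else if (i : ℕ) = 1 ∧ (j : ℕ) = 0 then 1 else 0)
      + (if (i : ℕ) = (j : ℕ) ∧ 1 ≤ (i : ℕ) then 1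
            else if (i : ℕ) = (j : ℕ) + 1 ∧ 1 ≤ (j : ℕ) then -1 else 0) := by
    intro i j
    simp [hA, Matrix.add_apply, Matrix.smul_apply, smul_eq_mul, Matrix.one_apply,
      Matrix.of_apply]
  rw [Matrix.det_succ_column_zero, Fin.sum_univ_succ, Fin.sum_univ_succ]
  have htail : ∀ i : Fin k, (-1 : ℂ) ^ ((i.succ.succ : Fin (k + 2)) : ℕ) *
      A i.succ.succ 0 * (A.submatrix i.succ.succ.succAbove Fin.succ).det = 0 := by
    intro i
    have hz : A i.succ.succ 0 = 0 := by
      rw [hentry]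
      simp only [Fin.ext_iff, Fin.val_succ, Fin.val_zero, and_false, false_and, and_true,
        true_and, if_true, if_false, not_false_iff, not_true]
      simp
    rw [hz]; ring
  rw [Finset.sum_congr rfl (fun i _ => htail i), Finset.sum_const, smul_zero]
  have h00 : A 0 0 = lam := by
    rw [hentry]
    simp only [Fin.ext_iff, Fin.val_zero, and_false, false_and, and_true, true_and,
      if_true, if_false, not_false_iff, not_true]
    split_ifs <;> first | ring1 | omega | (exfalso; omega) | (exfalso; assumption) | (rename_i hX; exact hX.1.elim) | (exfalso; simp_all)
  have h10 : A (Fin.succ 0) 0 = mu := by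
    rw [hentry]
    simp only [Fin.ext_iff, Fin.val_succ, Fin.val_zero, and_false, false_and, and_true,
      true_and, if_true, if_false, not_false_iff, not_true]
    split_ifs <;> first | ring1 | omega | (exfalso; omega) | (exfalso; assumption) | (rename_i hX; exact hX.1.elim) | (exfalso; simp_all)
  have hm0 : (A.submatrix (0 : Fin (k + 2)).succAbove Fin.succ).det = (lam + 1) ^ (k + 1) := by
    have hsub0 : A.submatrix (0 : Fin (k + 2)).succAbove Fin.succ
        = Matrix.of fun i j : Fin (k + 1) =>
          if (j : ℕ) + 1 = (i : ℕ) then (-1 : ℂ)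
          else if (i : ℕ) = (j : ℕ) then lam + 1 else 0 := by
      ext i j
      simp only [Matrix.submatrix_apply, Fin.succAbove_zero, Matrix.of_apply]
      rw [hentry]
      simp only [Fin.ext_iff, Fin.val_succ, Fin.val_zero, and_false, false_and, and_true,
        true_and, if_true, if_false, not_false_iff, not_true]
      split_ifs <;> first | ring1 | omega | (exfalso; omega) | (exfalso; assumption) | (rename_i hX; exact hX.1.elim) | (exfalso; simp_all)
    rw [hsub0, lowtri_det]
  have hval : ∀ i : Fin (k + 1),
      (((Fin.succ 0 : Fin (k + 2)).succAbove i : Fin (k + 2)) : ℕ)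
        = if (i : ℕ) = 0 then 0 else (i : ℕ) + 1 := by
    intro i
    rw [Fin.succAbove]
    split_ifs with hc1 hc2 hc3
    · simp at hc1 ⊢; omega
    · simp [Fin.lt_def] at hc1 hc2; omega
    · simp [Fin.lt_def] at hc1 hc3; omega
    · simp
  have hm1 : (A.submatrix (Fin.succ 0 : Fin (k + 2)).succAbove Fin.succ).det
      = ∑ j : Fin (k + 1), (mu * (θ j : ℂ)) * (lam + 1) ^ (k - (j : ℕ)) := by
    have hsub : A.submatrix (Fin.succ 0 : Fin (k + 2)).succAbove Fin.succ
        = Matrix.of fun i j : Fin (k + 1) =>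
          if (i : ℕ) = 0 then (mu * (θ j : ℂ))
          else if (j : ℕ) + 1 = (i : ℕ) then -1
          else if (i : ℕ) = (j : ℕ) then lam + 1 else 0 := by
      ext i j
      have hv := hval i
      simp only [Matrix.submatrix_apply, Matrix.of_apply]
      rw [hentry]
      simp only [Fin.ext_iff, Fin.val_succ, Fin.val_zero, hv, Nat.add_sub_cancel, Fin.eta,
        and_false, false_and, and_true, true_and, if_true, if_false, not_false_iff, not_true]
      by_cases hi : (i : ℕ) = 0
      · simp only [if_pos hi]
        split_ifs <;> first | ring1 | omega | (exfalso; omega) | (exfalso; assumption) | (rename_i hX; exact hX.1.elim) | (exfalso; simp_all)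
      · simp only [if_neg hi]
        split_ifs <;> first | ring1 | omega | (exfalso; omega) | (exfalso; assumption) | (rename_i hX; exact hX.1.elim) | (exfalso; simp_all)
    rw [hsub, hess_det (lam + 1) k (fun j => mu * (θ j : ℂ))]
  have hsum : (∑ j : Fin (k + 1), (mu * (θ j : ℂ)) * (lam + 1) ^ (k - (j : ℕ)))
      = mu * ∑ j ∈ Finset.range (k + 1), (θ ⟨k - j, by omega⟩ : ℂ) * (lam + 1) ^ j := by
    rw [Finset.mul_sum]
    rw [← Finset.sum_range_reflect
      (fun x => mu * ((θ ⟨k - x, by omega⟩ : ℂ) * (lam + 1) ^ x)) (k + 1)]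
    rw [← Fin.sum_univ_eq_sum_range
      (fun x => mu * ((θ ⟨k - (k + 1 - 1 - x), by omega⟩ : ℂ) * (lam + 1) ^ (k + 1 - 1 - x)))
      (k + 1)]
    refine Finset.sum_congr rfl fun j _ => ?_
    have hj := j.isLt
    have h2 : k + 1 - 1 - (j : ℕ) = k - (j : ℕ) := by omega
    have h4 : k - (k - (j : ℕ)) = (j : ℕ) := by omega
    simp only [h2, h4, Fin.eta]
    ring
  rw [h00, h10, hm0, hm1, hsum]
  simp only [Fin.val_zero, Fin.val_succ, pow_zero, pow_one, zero_add]
  ring
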